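/- arXiv:cs/0607055 — 2 statements merged into one kernel-verified Lean document; each statement's English description precedes it below -/
import Mathlib

section
/- Let G be a connected chordal graph and S an inclusion-minimal element of the set of minimal vertex separators of G. Then every connected component of G(V \ S) contains at least one simply separated (boundary) simplicial component of G, i.e., each component contains Simp(C) for some boundary clique C of G. -/
namespace Chordal

variable {V : Type*} [Fintype V]

/-- A closed walk has a chord: an edge of `G` joining two support vertices that is
not an edge of the walk. -/
def HasChord (G : SimpleGraph V) {u : V} (c : G.Walk u u) : Prop :=
  ∃ v w, v ∈ c.support ∧ w ∈ c.support ∧ G.Adj v w ∧ s(v, w) ∉ c.edges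

/-- A graph is chordal if every cycle of length at least 4 has a chord. -/
def IsChordal (G : SimpleGraph V) : Prop :=
  ∀ ⦃u : V⦄ (c : G.Walk u u), c.IsCycle → 4 ≤ c.length → HasChord G c

/-- A maximal clique of `G`. -/
def IsMaxClique (G : SimpleGraph V) (s : Set V) : Prop :=
  G.IsClique s ∧ ∀ t : Set V, G.IsClique t → s ⊆ t → s = t

/-- A maximal clique of the induced subgraph `G(W)`. -/
def IsMaxCliqueOn (G : SimpleGraph V) (W s : Set V) : Prop :=
  s ⊆ W ∧ G.IsClique s ∧ ∀ t : Set V, t ⊆ W → G.IsClique t → s ⊆ t → s = t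

/-- There is a walk from `u` to `w` staying inside `W` and avoiding `S`. -/
def ReachWithin (G : SimpleGraph V) (W S : Set V) (u w : V) : Prop :=
  ∃ p : G.Walk u w, ∀ x ∈ p.support, x ∈ W ∧ x ∉ S

/-- `S` separates `u` from `w` in the induced subgraph `G(W)`. -/
def SeparatesOn (G : SimpleGraph V) (W S : Set V) (u w : V) : Prop :=
  u ∈ W ∧ w ∈ W ∧ u ∉ S ∧ w ∉ S ∧ u ≠ w ∧ ¬ ReachWithin G W S u w

/-- `S` is a minimal vertex separator of the induced subgraph `G(W)`:
for some pair `u, w` it is an inclusion-minimal set separating `u` from `w`. -/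
def IsMinSeparatorOn (G : SimpleGraph V) (W S : Set V) : Prop :=
  S ⊆ W ∧ ∃ u w, SeparatesOn G W S u w ∧ ∀ S' ⊂ S, ¬ SeparatesOn G W S' u w

/-- `S` is a minimal vertex separator of `G`. -/
def IsMinSeparator (G : SimpleGraph V) (S : Set V) : Prop :=
  IsMinSeparatorOn G Set.univ S

/-- `S` is inclusion-minimal among the minimal vertex separators of `G`. -/
def IsInclMinSeparator (G : SimpleGraph V) (S : Set V) : Prop :=
  IsMinSeparator G S ∧ ∀ S' : Set V, IsMinSeparator G S' → S' ⊆ S → S' = S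

/-- `Γ` is a connected component of `G(V \ S)`. -/
def IsCompOutside (G : SimpleGraph V) (S Γ : Set V) : Prop :=
  ∃ u, u ∉ S ∧ Γ = {w | ReachWithin G Set.univ S u w}

/-- A vertex is simplicial if its neighborhood is a clique. -/
def IsSimplicial (G : SimpleGraph V) (v : V) : Prop :=
  G.IsClique (G.neighborSet v)

/-- The simplicial component of a clique `C`: the simplicial vertices of `G` in `C`. -/
def Simp (G : SimpleGraph V) (C : Set V) : Set V :=
  {v ∈ C | IsSimplicial G v}

/-- The non-simplicial component of a clique `C`. -/
def Sep (G : SimpleGraph V) (C : Set V) : Set V :=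
  C \ Simp G C

/-- `C` is a boundary clique (simply separated clique): a maximal clique such that
`Sep C = C ∩ C'` for some other maximal clique `C'`. -/
def IsBoundaryClique (G : SimpleGraph V) (C : Set V) : Prop :=
  IsMaxClique G C ∧ ∃ C' : Set V, IsMaxClique G C' ∧ C' ≠ C ∧ Sep G C = C ∩ C'

/-- The induced subgraph on `W`, kept on the same vertex type. -/
def restrictS (G : SimpleGraph V) (W : Set V) : SimpleGraph V where
  Adj u v := G.Adj u v ∧ u ∈ W ∧ v ∈ W
  symm := ⟨fun u v ⟨h, hu, hv⟩ => ⟨h.symm, hv, hu⟩⟩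
  loopless := ⟨fun u ⟨h, _, _⟩ => G.ne_of_adj h rfl⟩

/-- The vertex subset `A` induces a connected subgraph of `T`. -/
def ConnOn {α : Type*} (T : SimpleGraph α) (A : Set α) : Prop :=
  A.Nonempty ∧ ∀ u ∈ A, ∀ v ∈ A, ∃ p : T.Walk u v, ∀ x ∈ p.support, x ∈ A

/-- The induced subgraph `G(W)` is complete. -/
def CompleteOn (G : SimpleGraph V) (W : Set V) : Prop :=
  ∀ u ∈ W, ∀ v ∈ W, u ≠ v → G.Adj u v

/-- A clique tree of `G`: a tree on the maximal cliques of `G` satisfying the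
junction property. -/
def IsCliqueTree (G : SimpleGraph V) (T : SimpleGraph {s : Set V // IsMaxClique G s}) : Prop :=
  T.IsTree ∧ ∀ (C₁ C₂ : {s : Set V // IsMaxClique G s}) (p : T.Walk C₁ C₂), p.IsPath →
    ∀ C₃ ∈ p.support, C₁.val ∩ C₂.val ⊆ C₃.val

/-- A leaf (endpoint) of a graph: a vertex with exactly one neighbor. -/
def IsLeaf {α : Type*} (T : SimpleGraph α) (a : α) : Prop :=
  ∃! b, T.Adj a b

/-- The union of the cliques preceding position `k` in a sequence. -/
def prefUnion {K : ℕ} (f : Fin K → Set V) (k : Fin K) : Set V :=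
  {v | ∃ j, j < k ∧ v ∈ f j}

/-- A perfect sequence of the maximal cliques of the induced subgraph `G(W)`:
an enumeration of the maximal cliques of `G(W)` with the running intersection property. -/
def IsPerfectSeqOn (G : SimpleGraph V) (W : Set V) {K : ℕ} (f : Fin K → Set V) : Prop :=
  Function.Injective f ∧ (∀ s : Set V, IsMaxCliqueOn G W s ↔ ∃ k, f k = s) ∧
  ∀ k : Fin K, 0 < (k : ℕ) →
    G.IsClique (prefUnion f k ∩ f k) ∧ ∃ k' : Fin K, k' < k ∧ prefUnion f k ∩ f k ⊆ f k'

/-- A perfect sequence of the maximal cliques of `G`. -/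
def IsPerfectSeq (G : SimpleGraph V) {K : ℕ} (f : Fin K → Set V) : Prop :=
  Function.Injective f ∧ (∀ s : Set V, IsMaxClique G s ↔ ∃ k, f k = s) ∧
  ∀ k : Fin K, 0 < (k : ℕ) →
    G.IsClique (prefUnion f k ∩ f k) ∧ ∃ k' : Fin K, k' < k ∧ prefUnion f k ∩ f k ⊆ f k'

/-- The closed neighborhood of a vertex. -/
def closedNbhd (G : SimpleGraph V) (v : V) : Set V :=
  insert v (G.neighborSet v)


section Aux

open SimpleGraph

variable {V : Type*} [Fintype V] {G : SimpleGraph V}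

/-! ### Reachability infrastructure -/

lemma reach_refl {W S : Set V} {u : V} (hW : u ∈ W) (hS : u ∉ S) : ReachWithin G W S u u :=
  ⟨Walk.nil, by simp [hW, hS]⟩

lemma reach_symm {W S : Set V} {u v : V} (h : ReachWithin G W S u v) :
    ReachWithin G W S v u := by
  obtain ⟨p, hp⟩ := h
  exact ⟨p.reverse, by intro t ht; exact hp t (by simpa using ht)⟩

lemma reach_trans {W S : Set V} {u v w : V} (h1 : ReachWithin G W S u v)
    (h2 : ReachWithin G W S v w) : ReachWithin G W S u w := by
  obtain ⟨p, hp⟩ := h1; obtain ⟨q, hq⟩ := h2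
  refine ⟨p.append q, ?_⟩
  intro t ht
  rcases (Walk.mem_support_append_iff _ _).mp ht with h | h
  · exact hp t h
  · exact hq t h

lemma reach_left {W S : Set V} {u v : V} (h : ReachWithin G W S u v) : u ∈ W ∧ u ∉ S := by
  obtain ⟨p, hp⟩ := h; exact hp u p.start_mem_support

lemma reach_right {W S : Set V} {u v : V} (h : ReachWithin G W S u v) : v ∈ W ∧ v ∉ S := by
  obtain ⟨p, hp⟩ := h; exact hp v p.end_mem_support

lemma reach_step {W S : Set V} {u v t : V} (h : ReachWithin G W S u v) (ha : G.Adj v t)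
    (hW : t ∈ W) (hS : t ∉ S) : ReachWithin G W S u t := by
  refine reach_trans h ⟨Walk.cons ha Walk.nil, ?_⟩
  intro x hx
  simp only [Walk.support_cons, Walk.support_nil, List.mem_cons, List.mem_singleton] at hx
  rcases hx with rfl | hx
  · exact (reach_right h)
  · rcases hx with rfl | h'
    · exact ⟨hW, hS⟩
    · simp at h'

lemma reach_of_mem_support {W S : Set V} {u v : V} (p : G.Walk u v)
    (hp : ∀ t ∈ p.support, t ∈ W ∧ t ∉ S) {t : V} (ht : t ∈ p.support) :
    ReachWithin G W S u t := by
  classical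
  exact ⟨p.takeUntil t ht, fun x hx => hp x (p.support_takeUntil_subset ht hx)⟩

/-- Walks within the reach-set of `a`. -/
lemma reach_conn {W S : Set V} {a u v : V} (hu : ReachWithin G W S a u)
    (hv : ReachWithin G W S a v) :
    ∃ p : G.Walk u v, ∀ t ∈ p.support, ReachWithin G W S a t := by
  obtain ⟨p, hp⟩ := reach_symm hu
  obtain ⟨q, hq⟩ := hv
  refine ⟨p.append q, ?_⟩
  intro t ht
  rcases (Walk.mem_support_append_iff _ _).mp ht with h | h
  · exact reach_trans hu (reach_of_mem_support p hp h)
  · exact reach_of_mem_support q hq h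

/-- A walk between two distinct nonadjacent vertices with support inside `{a, b}` is absurd. -/
lemma no_walk_in_pair {a b : V} (hne : a ≠ b) (hnadj : ¬ G.Adj a b) (p : G.Walk a b)
    (hp : ∀ t ∈ p.support, t = a ∨ t = b) : False := by
  cases p with
  | nil => exact hne rfl
  | cons h q =>
    rename_i c
    have hc : c = a ∨ c = b := hp c (by simp)
    rcases hc with rfl | rfl
    · exact G.loopless.irrefl _ h
    · exact hnadj h

/-- Extract a minimal subset satisfying a predicate. -/
lemma exists_min_subset {P : Set V → Prop} {S₀ : Set V} (h : P S₀) :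
    ∃ T, T ⊆ S₀ ∧ P T ∧ ∀ T' ⊂ T, ¬ P T' := by
  classical
  have hne : ∃ n, ∃ T, T ⊆ S₀ ∧ P T ∧ T.ncard = n := ⟨S₀.ncard, S₀, le_refl _, h, rfl⟩
  obtain ⟨T, hTs, hTP, hTn⟩ := Nat.find_spec hne
  refine ⟨T, hTs, hTP, ?_⟩
  intro T' hss hP'
  have hlt : T'.ncard < T.ncard := Set.ncard_lt_ncard hss T.toFinite
  rw [hTn] at hlt
  exact Nat.find_min hne hlt ⟨T', hss.subset.trans hTs, hP', rfl⟩

/-- Any clique extends to a maximal clique. -/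
lemma exists_maxclique_superset :
    ∀ (k : ℕ) (s : Set V), G.IsClique s → Nat.card V - s.ncard ≤ k →
      ∃ C, IsMaxClique G C ∧ s ⊆ C := by
  intro k
  induction k with
  | zero =>
    intro s hs hk
    refine ⟨s, ⟨hs, ?_⟩, le_refl _⟩
    intro t ht hst
    have h1 : t.ncard ≤ s.ncard := by
      have := Set.ncard_le_ncard (Set.subset_univ t) Set.finite_univ
      rw [Set.ncard_univ] at this
      omega
    exact Set.eq_of_subset_of_ncard_le hst h1 t.toFinite
  | succ k ih =>
    intro s hs hk
    by_cases hmax : ∀ t : Set V, G.IsClique t → s ⊆ t → s = t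
    · exact ⟨s, ⟨hs, hmax⟩, le_refl _⟩
    · push_neg at hmax
      obtain ⟨t, ht, hst, hne⟩ := hmax
      have hss : s ⊂ t := ⟨hst, fun h => hne (le_antisymm hst h)⟩
      have h1 : s.ncard < t.ncard := Set.ncard_lt_ncard hss t.toFinite
      obtain ⟨C, hC, htC⟩ := ih t ht (by omega)
      exact ⟨C, hC, hst.trans htC⟩

lemma exists_maxclique (s : Set V) (hs : G.IsClique s) : ∃ C, IsMaxClique G C ∧ s ⊆ C :=
  exists_maxclique_superset (Nat.card V - s.ncard) s hs (le_refl _)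

/-- If a walk ends at `x` which occurs exactly once (so at the end), with all support in `W`
and all `S`-vertices equal to `x`, then `x` has a neighbor reachable from the start. -/
lemma last_step [DecidableEq V] {W S : Set V} :
    ∀ {c x : V} (q : G.Walk c x), c ≠ x → (∀ t ∈ q.support, t ∈ W ∧ (t ∈ S → t = x)) →
      q.support.count x = 1 → ∃ d, G.Adj x d ∧ ReachWithin G W S c d := by
  intro c x q
  induction q with
  | nil => intro hne _ _; exact absurd rfl hne
  | cons h r ih =>
    rename_i c c₂ x
    intro hne hsupp hcount
    have hcW : c ∈ W ∧ (c ∈ S → c = x) := hsupp c (by simp)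
    have hcS : c ∉ S := fun hc => hne (hcW.2 hc)
    by_cases hc2 : c₂ = x
    · subst hc2
      cases r with
      | nil =>
        exact ⟨c, h.symm, reach_refl hcW.1 hcS⟩
      | cons h2 r2 =>
        exfalso
        rename_i d _
        have hxr : c₂ ∈ r2.support := by
          have := r2.end_mem_support
          exact this
        have : (Walk.cons h (Walk.cons h2 r2)).support.count c₂ ≥ 2 := by
          simp only [Walk.support_cons, List.count_cons]
          have h1 : r2.support.count c₂ ≥ 1 := List.count_pos_iff.mpr hxr
          simp only [beq_self_eq_true, if_true]
          omega
        omega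
    · have hcount' : r.support.count x = 1 := by
        simp only [Walk.support_cons, List.count_cons] at hcount
        have : (c == x) = false := by simp [hne]
        rw [this] at hcount
        simpa using hcount
      obtain ⟨d, hd, hreach⟩ := ih hc2 (fun t ht => hsupp t (by simp [ht])) hcount'
      have hc2W : c₂ ∈ W ∧ (c₂ ∈ S → c₂ = x) := hsupp c₂ (by simp)
      have hc2S : c₂ ∉ S := fun hc => hc2 (hc2W.2 hc)
      exact ⟨d, hd, reach_trans (reach_step (reach_refl hcW.1 hcS) h hc2W.1 hc2S) hreach⟩

/-- From a walk `a → b` whose only possible `S`-vertex is `x`, in a situation where `S`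
separates `a` and `b` within `W`, extract a neighbor of `x` in the component of `a`. -/
lemma sep_neighbor {W S : Set V} {a b x : V} (ha : a ∉ S)
    (hsep : ¬ ReachWithin G W S a b) (p : G.Walk a b)
    (hp : ∀ t ∈ p.support, t ∈ W ∧ (t ∈ S → t = x)) :
    x ∈ S ∧ ∃ d, G.Adj x d ∧ ReachWithin G W S a d := by
  classical
  have hx : x ∈ p.support ∧ x ∈ S := by
    by_contra hcon
    have : ∀ t ∈ p.support, t ∈ W ∧ t ∉ S := by
      intro t ht
      refine ⟨(hp t ht).1, fun hts => ?_⟩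
      have := (hp t ht).2 hts
      subst this
      exact hcon ⟨ht, hts⟩
    exact hsep ⟨p, this⟩
  have haxne : a ≠ x := fun h => ha (h ▸ hx.2)
  set q := p.takeUntil x hx.1 with hq
  have hqs : ∀ t ∈ q.support, t ∈ W ∧ (t ∈ S → t = x) :=
    fun t ht => hp t (p.support_takeUntil_subset hx.1 ht)
  have hqc : q.support.count x = 1 := p.count_support_takeUntil_eq_one hx.1
  obtain ⟨d, hd, hr⟩ := last_step q haxne hqs hqc
  exact ⟨hx.2, d, hd, hr⟩

/-- Two vertices that are both linked to two "separated sides" are adjacent (chordality). -/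
lemma adj_of_linked (hch : IsChordal G) {A B : Set V}
    (hAB : ∀ u ∈ A, ∀ v ∈ B, ¬ G.Adj u v)
    (hABd : ∀ u, u ∈ A → u ∈ B → False)
    {x y : V} (hxy : x ≠ y) (hxA : x ∉ A) (hxB : x ∉ B) (hyA : y ∉ A) (hyB : y ∉ B)
    {dA eA dB eB : V} (hdA : dA ∈ A) (hxdA : G.Adj x dA)
    (heA : eA ∈ A) (hyeA : G.Adj y eA)
    (hdB : dB ∈ B) (hxdB : G.Adj x dB)
    (heB : eB ∈ B) (hyeB : G.Adj y eB)
    (hconnA : ∃ p : G.Walk dA eA, ∀ t ∈ p.support, t ∈ A)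
    (hconnB : ∃ p : G.Walk eB dB, ∀ t ∈ p.support, t ∈ B) :
    G.Adj x y := by
  classical
  by_contra hnadj
  -- minimal A-side connector
  set FA : ℕ → Prop := fun n => ∃ (d e : V) (q : G.Walk d e),
    G.Adj x d ∧ G.Adj y e ∧ (∀ t ∈ q.support, t ∈ A) ∧ q.length = n with hFAdef
  have hFA : ∃ n, FA n := by
    obtain ⟨p, hp⟩ := hconnA
    exact ⟨p.length, dA, eA, p, hxdA, hyeA, hp, rfl⟩
  set nA := Nat.find hFA with hnA
  obtain ⟨d, e, q₀, hxd, hye, hq₀A, hq₀len⟩ := Nat.find_spec hFA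
  set qA := q₀.bypass with hqAdef
  have hqAsub : ∀ t ∈ qA.support, t ∈ A := fun t ht => hq₀A t (q₀.support_bypass_subset ht)
  have hqApath : qA.IsPath := Walk.bypass_isPath q₀
  have hqAlen : qA.length = nA := by
    have h1 : qA.length ≤ nA := by rw [hnA, ← hq₀len]; exact q₀.length_bypass_le
    have h2 : ¬ qA.length < nA := fun hlt =>
      Nat.find_min hFA hlt ⟨d, e, qA, hxd, hye, hqAsub, rfl⟩
    omega
  -- minimal B-side connector
  set FB : ℕ → Prop := fun n => ∃ (f g : V) (q : G.Walk f g),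
    G.Adj y f ∧ G.Adj g x ∧ (∀ t ∈ q.support, t ∈ B) ∧ q.length = n with hFBdef
  have hFB : ∃ n, FB n := by
    obtain ⟨p, hp⟩ := hconnB
    exact ⟨p.length, eB, dB, p, hyeB, hxdB.symm, hp, rfl⟩
  set nB := Nat.find hFB with hnB
  obtain ⟨f, g, r₀, hyf, hgx, hr₀B, hr₀len⟩ := Nat.find_spec hFB
  set qB := r₀.bypass with hqBdef
  have hqBsub : ∀ t ∈ qB.support, t ∈ B := fun t ht => hr₀B t (r₀.support_bypass_subset ht)
  have hqBpath : qB.IsPath := Walk.bypass_isPath r₀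
  have hqBlen : qB.length = nB := by
    have h1 : qB.length ≤ nB := by rw [hnB, ← hr₀len]; exact r₀.length_bypass_le
    have h2 : ¬ qB.length < nB := fun hlt =>
      Nat.find_min hFB hlt ⟨f, g, qB, hyf, hgx, hqBsub, rfl⟩
    omega
  -- the cycle
  set P : G.Walk d x :=
    qA.append (Walk.cons hye.symm (Walk.cons hyf (qB.append (Walk.cons hgx Walk.nil)))) with hPdef
  set c : G.Walk x x := Walk.cons hxd P with hcdef
  have hPs : P.support = qA.support ++ (y :: (qB.support ++ [x])) := by
    simp [hPdef, Walk.support_append, Walk.support_cons]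
  have hPnodup : P.support.Nodup := by
    rw [hPs, List.nodup_append]
    refine ⟨hqApath.support_nodup, ?_, ?_⟩
    · rw [List.nodup_cons]
      constructor
      · intro hy
        rcases List.mem_append.mp hy with h | h
        · exact hyB (hqBsub _ h)
        · rw [List.mem_singleton] at h; exact hxy h.symm
      · rw [List.nodup_append]
        refine ⟨hqBpath.support_nodup, List.nodup_singleton x, ?_⟩
        intro t ht t' h1 he
        subst he
        rw [List.mem_singleton] at h1
        subst h1
        exact hxB (hqBsub _ ht)
    · intro t ht t' h2 he
      subst he
      have htA : t ∈ A := hqAsub _ ht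
      rcases List.mem_cons.mp h2 with rfl | h2
      · exact hyA htA
      · rcases List.mem_append.mp h2 with h | h
        · exact hABd t htA (hqBsub _ h)
        · rw [List.mem_singleton] at h; subst h; exact hxA htA
  have hPe : P.edges = qA.edges ++ (s(e, y) :: s(y, f) :: (qB.edges ++ [s(g, x)])) := by
    simp [hPdef, Walk.edges_append, Walk.edges_cons]
  have hPedge : s(x, d) ∉ P.edges := by
    rw [hPe]
    intro hmem
    rcases List.mem_append.mp hmem with h | h
    · exact hxA (hqAsub _ (Walk.fst_mem_support_of_mem_edges qA h))
    · rcases List.mem_cons.mp h with h | h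
      · rcases Sym2.eq_iff.mp h with ⟨h1, _⟩ | ⟨h1, _⟩
        · exact hxA (h1 ▸ hqAsub _ qA.end_mem_support)
        · exact hxy h1
      · rcases List.mem_cons.mp h with h | h
        · rcases Sym2.eq_iff.mp h with ⟨h1, _⟩ | ⟨h1, _⟩
          · exact hxy h1
          · exact hxB (h1 ▸ hqBsub _ qB.start_mem_support)
        · rcases List.mem_append.mp h with h | h
          · exact hxB (hqBsub _ (Walk.fst_mem_support_of_mem_edges qB h))
          · rw [List.mem_singleton] at h
            rcases Sym2.eq_iff.mp h with ⟨h1, _⟩ | ⟨_, h2⟩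
            · exact hxB (h1 ▸ hqBsub _ qB.end_mem_support)
            · exact hABd d (hqAsub _ qA.start_mem_support) (h2 ▸ hqBsub _ qB.end_mem_support)
  have hcyc : c.IsCycle := (Walk.cons_isCycle_iff P hxd).mpr
    ⟨(Walk.isPath_def _).mpr hPnodup, hPedge⟩
  have hclen : 4 ≤ c.length := by
    simp only [hcdef, hPdef, Walk.length_cons, Walk.length_append, Walk.length_nil]
    omega
  have hce : c.edges = s(x, d) :: (qA.edges ++ (s(e, y) :: s(y, f) :: (qB.edges ++ [s(g, x)]))) := by
    rw [hcdef, Walk.edges_cons, hPe]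
  have hexd : s(x, d) ∈ c.edges := by rw [hce]; exact List.mem_cons_self
  have heyc : s(e, y) ∈ c.edges := by rw [hce]; simp
  have hyfc : s(y, f) ∈ c.edges := by rw [hce]; simp
  have hgxc : s(g, x) ∈ c.edges := by rw [hce]; simp
  have hqAc : ∀ ed ∈ qA.edges, ed ∈ c.edges := by intro ed hed; rw [hce]; simp [hed]
  have hqBc : ∀ ed ∈ qB.edges, ed ∈ c.edges := by intro ed hed; rw [hce]; simp [hed]
  have hcs : ∀ t ∈ c.support, t = x ∨ t = y ∨ t ∈ qA.support ∨ t ∈ qB.support := by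
    intro t ht
    rw [hcdef, Walk.support_cons] at ht
    rcases List.mem_cons.mp ht with rfl | ht
    · exact Or.inl rfl
    · rw [hPs] at ht
      rcases List.mem_append.mp ht with h | h
      · exact Or.inr (Or.inr (Or.inl h))
      · rcases List.mem_cons.mp h with rfl | h
        · exact Or.inr (Or.inl rfl)
        · rcases List.mem_append.mp h with h | h
          · exact Or.inr (Or.inr (Or.inr h))
          · rw [List.mem_singleton] at h; exact Or.inl h
  -- inner shortcut lemma, A side
  have innerA : ∀ (v₁ v₂ : V) (X : G.Walk d v₁) (M : G.Walk v₁ v₂) (Z : G.Walk v₂ e),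
      qA = X.append (M.append Z) → G.Adj v₁ v₂ → s(v₁, v₂) ∈ c.edges := by
    intro v₁ v₂ X M Z
    cases M with
    | nil =>
      intro _ hadj
      exact absurd hadj (G.loopless.irrefl v₁)
    | cons h2 M' =>
      cases M' with
      | nil =>
        intro heq _
        apply hqAc
        rw [heq]
        simp [Walk.edges_append, Walk.edges_cons]
      | cons h3 M'' =>
        intro heq hadj
        exfalso
        have hlen := congrArg Walk.length heq
        rw [Walk.length_append, Walk.length_append, Walk.length_cons, Walk.length_cons] at hlen
        have hsub : ∀ t ∈ (X.append (Walk.cons hadj Z)).support, t ∈ A := by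
          intro t ht
          rcases (Walk.mem_support_append_iff _ _).mp ht with h | h
          · exact hqAsub t (by rw [heq]; exact (Walk.mem_support_append_iff _ _).mpr (Or.inl h))
          · rw [Walk.support_cons] at h
            rcases List.mem_cons.mp h with rfl | h
            · exact hqAsub t (by
                rw [heq]
                exact (Walk.mem_support_append_iff _ _).mpr
                  (Or.inr ((Walk.mem_support_append_iff _ _).mpr (Or.inl (Walk.start_mem_support _)))))
            · exact hqAsub t (by
                rw [heq]
                exact (Walk.mem_support_append_iff _ _).mpr
                  (Or.inr ((Walk.mem_support_append_iff _ _).mpr (Or.inr h))))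
        have hnew : FA ((X.append (Walk.cons hadj Z)).length) :=
          ⟨d, e, X.append (Walk.cons hadj Z), hxd, hye, hsub, rfl⟩
        have hlnew : (X.append (Walk.cons hadj Z)).length < nA := by
          rw [Walk.length_append, Walk.length_cons]
          omega
        exact Nat.find_min hFA hlnew hnew
  have innerB : ∀ (v₁ v₂ : V) (X : G.Walk f v₁) (M : G.Walk v₁ v₂) (Z : G.Walk v₂ g),
      qB = X.append (M.append Z) → G.Adj v₁ v₂ → s(v₁, v₂) ∈ c.edges := by
    intro v₁ v₂ X M Z
    cases M with
    | nil =>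
      intro _ hadj
      exact absurd hadj (G.loopless.irrefl v₁)
    | cons h2 M' =>
      cases M' with
      | nil =>
        intro heq _
        apply hqBc
        rw [heq]
        simp [Walk.edges_append, Walk.edges_cons]
      | cons h3 M'' =>
        intro heq hadj
        exfalso
        have hlen := congrArg Walk.length heq
        rw [Walk.length_append, Walk.length_append, Walk.length_cons, Walk.length_cons] at hlen
        have hsub : ∀ t ∈ (X.append (Walk.cons hadj Z)).support, t ∈ B := by
          intro t ht
          rcases (Walk.mem_support_append_iff _ _).mp ht with h | h
          · exact hqBsub t (by rw [heq]; exact (Walk.mem_support_append_iff _ _).mpr (Or.inl h))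
          · rw [Walk.support_cons] at h
            rcases List.mem_cons.mp h with rfl | h
            · exact hqBsub t (by
                rw [heq]
                exact (Walk.mem_support_append_iff _ _).mpr
                  (Or.inr ((Walk.mem_support_append_iff _ _).mpr (Or.inl (Walk.start_mem_support _)))))
            · exact hqBsub t (by
                rw [heq]
                exact (Walk.mem_support_append_iff _ _).mpr
                  (Or.inr ((Walk.mem_support_append_iff _ _).mpr (Or.inr h))))
        have hnew : FB ((X.append (Walk.cons hadj Z)).length) :=
          ⟨f, g, X.append (Walk.cons hadj Z), hyf, hgx, hsub, rfl⟩
        have hlnew : (X.append (Walk.cons hadj Z)).length < nB := by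
          rw [Walk.length_append, Walk.length_cons]
          omega
        exact Nat.find_min hFB hlnew hnew
  have shortA : ∀ v' w', v' ∈ qA.support → w' ∈ qA.support → G.Adj v' w' →
      s(v', w') ∈ c.edges := by
    intro v' w' hv hw hadj
    obtain ⟨X, r1, heq⟩ := Walk.mem_support_iff_exists_append.mp hv
    by_cases hw1 : w' ∈ r1.support
    · obtain ⟨M, Z, heq2⟩ := Walk.mem_support_iff_exists_append.mp hw1
      exact innerA v' w' X M Z (by rw [heq, heq2]) hadj
    · have hwX : w' ∈ X.support := by
        rw [heq] at hw
        rcases (Walk.mem_support_append_iff _ _).mp hw with h | h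
        · exact h
        · exact absurd h hw1
      obtain ⟨X', M, heq2⟩ := Walk.mem_support_iff_exists_append.mp hwX
      have h := innerA w' v' X' M r1 (by rw [heq, heq2, Walk.append_assoc]) hadj.symm
      rwa [Sym2.eq_swap] at h
  have shortB : ∀ v' w', v' ∈ qB.support → w' ∈ qB.support → G.Adj v' w' →
      s(v', w') ∈ c.edges := by
    intro v' w' hv hw hadj
    obtain ⟨X, r1, heq⟩ := Walk.mem_support_iff_exists_append.mp hv
    by_cases hw1 : w' ∈ r1.support
    · obtain ⟨M, Z, heq2⟩ := Walk.mem_support_iff_exists_append.mp hw1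
      exact innerB v' w' X M Z (by rw [heq, heq2]) hadj
    · have hwX : w' ∈ X.support := by
        rw [heq] at hw
        rcases (Walk.mem_support_append_iff _ _).mp hw with h | h
        · exact h
        · exact absurd h hw1
      obtain ⟨X', M, heq2⟩ := Walk.mem_support_iff_exists_append.mp hwX
      have h := innerB w' v' X' M r1 (by rw [heq, heq2, Walk.append_assoc]) hadj.symm
      rwa [Sym2.eq_swap] at h
  have shortxA : ∀ w' ∈ qA.support, G.Adj x w' → s(x, w') ∈ c.edges := by
    intro w' hw hadj
    obtain ⟨X, r1, heq⟩ := Walk.mem_support_iff_exists_append.mp hw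
    cases X with
    | nil => exact hexd
    | cons h1 X' =>
      exfalso
      have hsub : ∀ t ∈ r1.support, t ∈ A := by
        intro t ht
        exact hqAsub t (by rw [heq]; exact (Walk.mem_support_append_iff _ _).mpr (Or.inr ht))
      have hnew : FA r1.length := ⟨w', e, r1, hadj, hye, hsub, rfl⟩
      have hlen := congrArg Walk.length heq
      rw [Walk.length_append, Walk.length_cons] at hlen
      exact Nat.find_min hFA (by omega) hnew
  have shortyA : ∀ w' ∈ qA.support, G.Adj y w' → s(y, w') ∈ c.edges := by
    intro w' hw hadj
    obtain ⟨X, r1, heq⟩ := Walk.mem_support_iff_exists_append.mp hw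
    cases r1 with
    | nil => rw [Sym2.eq_swap]; exact heyc
    | cons h1 r1' =>
      exfalso
      have hsub : ∀ t ∈ X.support, t ∈ A := by
        intro t ht
        exact hqAsub t (by rw [heq]; exact (Walk.mem_support_append_iff _ _).mpr (Or.inl ht))
      have hnew : FA X.length := ⟨d, w', X, hxd, hadj, hsub, rfl⟩
      have hlen := congrArg Walk.length heq
      rw [Walk.length_append, Walk.length_cons] at hlen
      exact Nat.find_min hFA (by omega) hnew
  have shortxB : ∀ w' ∈ qB.support, G.Adj x w' → s(x, w') ∈ c.edges := by
    intro w' hw hadj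
    obtain ⟨X, r1, heq⟩ := Walk.mem_support_iff_exists_append.mp hw
    cases r1 with
    | nil => rw [Sym2.eq_swap]; exact hgxc
    | cons h1 r1' =>
      exfalso
      have hsub : ∀ t ∈ X.support, t ∈ B := by
        intro t ht
        exact hqBsub t (by rw [heq]; exact (Walk.mem_support_append_iff _ _).mpr (Or.inl ht))
      have hnew : FB X.length := ⟨f, w', X, hyf, hadj.symm, hsub, rfl⟩
      have hlen := congrArg Walk.length heq
      rw [Walk.length_append, Walk.length_cons] at hlen
      exact Nat.find_min hFB (by omega) hnew
  have shortyB : ∀ w' ∈ qB.support, G.Adj y w' → s(y, w') ∈ c.edges := by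
    intro w' hw hadj
    obtain ⟨X, r1, heq⟩ := Walk.mem_support_iff_exists_append.mp hw
    cases X with
    | nil => exact hyfc
    | cons h1 X' =>
      exfalso
      have hsub : ∀ t ∈ r1.support, t ∈ B := by
        intro t ht
        exact hqBsub t (by rw [heq]; exact (Walk.mem_support_append_iff _ _).mpr (Or.inr ht))
      have hnew : FB r1.length := ⟨w', g, r1, hadj, hgx, hsub, rfl⟩
      have hlen := congrArg Walk.length heq
      rw [Walk.length_append, Walk.length_cons] at hlen
      exact Nat.find_min hFB (by omega) hnew
  -- extract the chord and refute it
  obtain ⟨v', w', hv', hw', hadj', hchord⟩ := hch c hcyc hclen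
  rcases hcs v' hv' with rfl | rfl | hvA | hvB
  · rcases hcs w' hw' with rfl | rfl | hwA | hwB
    · exact G.loopless.irrefl _ hadj'
    · exact hnadj hadj'
    · exact hchord (shortxA w' hwA hadj')
    · exact hchord (shortxB w' hwB hadj')
  · rcases hcs w' hw' with rfl | rfl | hwA | hwB
    · exact hnadj hadj'.symm
    · exact G.loopless.irrefl _ hadj'
    · exact hchord (shortyA w' hwA hadj')
    · exact hchord (shortyB w' hwB hadj')
  · rcases hcs w' hw' with rfl | rfl | hwA | hwB
    · exact hchord (by rw [Sym2.eq_swap]; exact shortxA v' hvA hadj'.symm)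
    · exact hchord (by rw [Sym2.eq_swap]; exact shortyA v' hvA hadj'.symm)
    · exact hchord (shortA v' w' hvA hwA hadj')
    · exact hAB v' (hqAsub _ hvA) w' (hqBsub _ hwB) hadj'
  · rcases hcs w' hw' with rfl | rfl | hwA | hwB
    · exact hchord (by rw [Sym2.eq_swap]; exact shortxB v' hvB hadj'.symm)
    · exact hchord (by rw [Sym2.eq_swap]; exact shortyB v' hvB hadj'.symm)
    · exact hAB w' (hqAsub _ hwA) v' (hqBsub _ hvB) hadj'.symm
    · exact hchord (shortB v' w' hvB hwB hadj')

/-- `v` is simplicial in the induced subgraph `G(W)`. -/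
def SimpW (G : SimpleGraph V) (W : Set V) (v : V) : Prop :=
  v ∈ W ∧ G.IsClique {u | u ∈ W ∧ G.Adj v u}

/-- Dirac's theorem: a nonempty induced subgraph of a chordal graph is either complete or
has two nonadjacent simplicial vertices. -/
lemma dirac (hch : IsChordal G) :
    ∀ (n : ℕ) (W : Set V), W.ncard ≤ n → W.Nonempty →
      G.IsClique W ∨ ∃ p q, SimpW G W p ∧ SimpW G W q ∧ p ≠ q ∧ ¬ G.Adj p q := by
  intro n
  induction n with
  | zero =>
    intro W hWc hWne
    exfalso
    have := (Set.ncard_pos W.toFinite).mpr hWne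
    omega
  | succ n ih =>
    intro W hWcard hWne
    by_cases hcl : G.IsClique W
    · exact Or.inl hcl
    right
    have hpair : ∃ a ∈ W, ∃ b ∈ W, a ≠ b ∧ ¬ G.Adj a b := by
      by_contra hno
      push_neg at hno
      exact hcl fun a ha b hb hne => hno a ha b hb hne
    obtain ⟨a, haW, b, hbW, hab, hnadj⟩ := hpair
    have hsep0 : ¬ ReachWithin G W (W \ {a, b}) a b := by
      rintro ⟨p, hp⟩
      apply no_walk_in_pair hab hnadj p
      intro t ht
      obtain ⟨h1, h2⟩ := hp t ht
      by_contra hcon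
      push_neg at hcon
      exact h2 ⟨h1, by simp [hcon.1, hcon.2]⟩
    obtain ⟨T, hTsub, hTsep, hTmin⟩ :=
      exists_min_subset (P := fun T => ¬ ReachWithin G W T a b) hsep0
    have haT : a ∉ T := fun h => (hTsub h).2 (by simp)
    have hbT : b ∉ T := fun h => (hTsub h).2 (by simp)
    set A := {t | ReachWithin G W T a t} with hAdef
    set B := {t | ReachWithin G W T b t} with hBdef
    have hdisjAB : ∀ u, u ∈ A → u ∈ B → False :=
      fun u hu hv => hTsep (reach_trans hu (reach_symm hv))
    have hnadjAB : ∀ u ∈ A, ∀ v ∈ B, ¬ G.Adj u v := by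
      intro u hu v hv hadj
      have h1 := reach_right hv
      exact hdisjAB v (reach_step hu hadj h1.1 h1.2) hv
    have hfull : ∀ x ∈ T, (∃ d, G.Adj x d ∧ d ∈ A) ∧ (∃ d, G.Adj x d ∧ d ∈ B) := by
      intro x hxT
      have hlt : T \ {x} ⊂ T := by
        constructor
        · exact Set.diff_subset
        · intro hsub
          exact (hsub hxT).2 rfl
      obtain ⟨p, hp⟩ := not_not.mp (hTmin _ hlt)
      have hp' : ∀ t ∈ p.support, t ∈ W ∧ (t ∈ T → t = x) := by
        intro t ht
        refine ⟨(hp t ht).1, fun htT => ?_⟩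
        by_contra hne
        exact (hp t ht).2 ⟨htT, hne⟩
      obtain ⟨_, d, hd, hr⟩ := sep_neighbor haT hTsep p hp'
      obtain ⟨_, d', hd', hr'⟩ := sep_neighbor hbT (fun h => hTsep (reach_symm h)) p.reverse
        (by intro t ht; exact hp' t (by simpa using ht))
      exact ⟨⟨d, hd, hr⟩, ⟨d', hd', hr'⟩⟩
    have hTclique : G.IsClique T := by
      intro x hxT y hyT hne
      obtain ⟨⟨d1, hd1, hr1⟩, ⟨d2, hd2, hr2⟩⟩ := hfull x hxT
      obtain ⟨⟨e1, he1, hs1⟩, ⟨e2, he2, hs2⟩⟩ := hfull y hyT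
      obtain ⟨pc, hpc⟩ := reach_conn hr1 hs1
      obtain ⟨qc, hqc⟩ := reach_conn hs2 hr2
      exact adj_of_linked hch hnadjAB hdisjAB hne
        (fun h => (reach_right h).2 hxT) (fun h => (reach_right h).2 hxT)
        (fun h => (reach_right h).2 hyT) (fun h => (reach_right h).2 hyT)
        hr1 hd1 hs1 he1 hr2 hd2 hs2 he2 ⟨pc, hpc⟩ ⟨qc, hqc⟩
    have oneSide : ∀ c o : V, c ∈ W → c ∉ T → o ∈ W → o ∉ T → ¬ ReachWithin G W T c o →
        ∃ p, SimpW G W p ∧ ReachWithin G W T c p := by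
      intro c o hcW hcT hoW hoT hsep'
      set Ac := {t | ReachWithin G W T c t} with hAcd
      set W₁ := Ac ∪ T with hW₁d
      have hcAc : c ∈ Ac := reach_refl hcW hcT
      have hW₁W : W₁ ⊆ W := by
        intro t ht
        rcases ht with h | h
        · exact (reach_right h).1
        · exact (hTsub h).1
      have hoW₁ : o ∉ W₁ := by
        intro h
        rcases h with h | h
        · exact hsep' h
        · exact hoT h
      have hW₁ne : W₁.Nonempty := ⟨c, Or.inl hcAc⟩
      have hcard : W₁.ncard ≤ n := by
        have hss : W₁ ⊂ W := ⟨hW₁W, fun h => hoW₁ (h hoW)⟩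
        have := Set.ncard_lt_ncard hss W.toFinite
        omega
      have hclos : ∀ u ∈ Ac, ∀ v, G.Adj u v → v ∈ W → v ∈ W₁ := by
        intro u hu v hadj hvW
        by_cases hvT : v ∈ T
        · exact Or.inr hvT
        · exact Or.inl (reach_step hu hadj hvW hvT)
      rcases ih W₁ hcard hW₁ne with hcomp | ⟨p1, q1, hp1, hq1, hne1, hnadj1⟩
      · refine ⟨c, ⟨hcW, ?_⟩, hcAc⟩
        intro u hu v hv hne
        exact hcomp (hclos c hcAc u hu.2 hu.1) (hclos c hcAc v hv.2 hv.1) hne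
      · have hget : ∃ p, p ∈ Ac ∧ SimpW G W₁ p := by
          rcases hp1.1 with h | h
          · exact ⟨p1, h, hp1⟩
          · rcases hq1.1 with h' | h'
            · exact ⟨q1, h', hq1⟩
            · exact absurd (hTclique h h' hne1) hnadj1
        obtain ⟨p, hpAc, hpS⟩ := hget
        refine ⟨p, ⟨hW₁W hpS.1, ?_⟩, hpAc⟩
        have hseteq : {u | u ∈ W ∧ G.Adj p u} = {u | u ∈ W₁ ∧ G.Adj p u} := by
          ext u
          constructor
          · rintro ⟨h1, h2⟩
            exact ⟨hclos p hpAc u h2 h1, h2⟩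
          · rintro ⟨h1, h2⟩
            exact ⟨hW₁W h1, h2⟩
        rw [hseteq]
        exact hpS.2
    obtain ⟨p, hpS, hpA⟩ := oneSide a b haW haT hbW hbT hTsep
    obtain ⟨q, hqS, hqB⟩ := oneSide b a hbW hbT haW haT (fun h => hTsep (reach_symm h))
    refine ⟨p, q, hpS, hqS, ?_, hnadjAB p hpA q hqB⟩
    intro h
    exact hdisjAB p hpA (h ▸ hqB)

/-- Removing a vertex whose `A`-neighborhood is a clique preserves connectivity. -/
lemma walk_avoid {A : Set V} {t : V}
    (hcl : ∀ u v, u ∈ A → v ∈ A → G.Adj t u → G.Adj t v → u ≠ v → G.Adj u v) :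
    ∀ (n : ℕ) {a b : V} (p : G.Walk a b), p.length ≤ n → (∀ s ∈ p.support, s ∈ A) →
      a ≠ t → b ≠ t → ∃ q : G.Walk a b, ∀ s ∈ q.support, s ∈ A ∧ s ≠ t := by
  intro n
  induction n with
  | zero =>
    intro a b p hlen hsupp ha hb
    cases p with
    | nil => exact ⟨Walk.nil, by intro s hs; simp at hs; subst hs; exact ⟨hsupp _ (by simp), ha⟩⟩
    | cons h r => simp [Walk.length_cons] at hlen
  | succ n ihn =>
    intro a b p hlen hsupp ha hb
    cases p with
    | nil => exact ⟨Walk.nil, by intro s hs; simp at hs; subst hs; exact ⟨hsupp _ (by simp), ha⟩⟩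
    | cons h r =>
      rename_i c
      rw [Walk.length_cons] at hlen
      by_cases hc : c = t
      · subst hc
        cases r with
        | nil => exact absurd rfl hb
        | cons h2 r2 =>
          rename_i d
          rw [Walk.length_cons] at hlen
          have hdt : d ≠ c := fun he => G.loopless.irrefl c (he ▸ h2)
          have hdA : d ∈ A := hsupp d (by simp)
          by_cases hda : d = a
          · subst hda
            exact ihn r2 (by omega) (fun s hs => hsupp s (by simp [hs])) ha hb
          · have hadj : G.Adj a d :=
              hcl a d (hsupp a (by simp)) hdA h.symm h2 (Ne.symm hda)
            exact ihn (Walk.cons hadj r2) (by rw [Walk.length_cons]; omega)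
              (by
                intro s hs
                rw [Walk.support_cons] at hs
                rcases List.mem_cons.mp hs with rfl | hs
                · exact hsupp s (by simp)
                · exact hsupp s (by simp [hs]))
              ha hb
      · obtain ⟨q', hq'⟩ := ihn r (by omega) (fun s hs => hsupp s (by simp [hs])) hc hb
        refine ⟨Walk.cons h q', ?_⟩
        intro s hs
        rw [Walk.support_cons] at hs
        rcases List.mem_cons.mp hs with rfl | hs
        · exact ⟨hsupp s (by simp), ha⟩
        · exact hq' s hs

/-- In a chordal graph, a connected set `A` that is "full" for a clique `S₀`
contains a vertex adjacent to all of `S₀`. -/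
lemma common_neighbor (hch : IsChordal G) :
    ∀ (n : ℕ) (A S₀ : Set V), A.ncard ≤ n → A.Nonempty →
      (∀ u ∈ A, ∀ v ∈ A, ∃ p : G.Walk u v, ∀ t ∈ p.support, t ∈ A) →
      (∀ x ∈ S₀, x ∉ A) → G.IsClique S₀ → (∀ x ∈ S₀, ∃ a ∈ A, G.Adj x a) →
      ∃ z ∈ A, ∀ x ∈ S₀, G.Adj z x := by
  intro n
  induction n with
  | zero =>
    intro A S₀ hcard hne _ _ _ _
    exfalso
    have := (Set.ncard_pos A.toFinite).mpr hne
    omega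
  | succ n ihn =>
    intro A S₀ hcard hne hconn hdisj hclS hfull
    set W := A ∪ S₀ with hWdef
    have hWne : W.Nonempty := hne.mono Set.subset_union_left
    rcases dirac hch W.ncard W le_rfl hWne with hcomp | ⟨p1, q1, hp1, hq1, hne1, hnadj1⟩
    · obtain ⟨a, ha⟩ := hne
      refine ⟨a, ha, fun x hx => ?_⟩
      exact hcomp (Or.inl ha) (Or.inr hx) (fun he => hdisj x hx (he ▸ ha))
    · have hget : ∃ v, v ∈ A ∧ SimpW G W v := by
        rcases hp1.1 with h | h
        · exact ⟨p1, h, hp1⟩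
        · rcases hq1.1 with h' | h'
          · exact ⟨q1, h', hq1⟩
          · exact absurd (hclS h h' hne1) hnadj1
      obtain ⟨v, hvA, hvS⟩ := hget
      by_cases hvall : ∀ x ∈ S₀, G.Adj v x
      · exact ⟨v, hvA, hvall⟩
      · push_neg at hvall
        have hA2 : ∃ a₁ ∈ A, a₁ ≠ v := by
          by_contra hno
          push_neg at hno
          obtain ⟨x₀, hx₀, hnadjx⟩ := hvall
          obtain ⟨a, haA, hadj⟩ := hfull x₀ hx₀
          exact hnadjx (((hno a haA) ▸ hadj).symm)
        obtain ⟨a₁, ha₁A, ha₁v⟩ := hA2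
        have ha₂ : ∃ a₂, a₂ ∈ A ∧ a₂ ≠ v ∧ G.Adj v a₂ := by
          obtain ⟨p, hp⟩ := hconn v hvA a₁ ha₁A
          cases p with
          | nil => exact absurd rfl ha₁v.symm
          | cons h r =>
            rename_i c
            exact ⟨c, hp c (by simp), fun he => G.loopless.irrefl v (he ▸ h), h⟩
        obtain ⟨a₂, ha₂A, ha₂v, hva₂⟩ := ha₂
        set A' := A \ {v} with hA'def
        have hNv : ∀ u w, u ∈ W → w ∈ W → G.Adj v u → G.Adj v w → u ≠ w → G.Adj u w :=
          fun u w hu hw h1 h2 hne' => hvS.2 ⟨hu, h1⟩ ⟨hw, h2⟩ hne'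
        have hcard' : A'.ncard ≤ n := by
          have hss : A' ⊂ A := ⟨Set.diff_subset, fun h => (h hvA).2 rfl⟩
          have := Set.ncard_lt_ncard hss A.toFinite
          omega
        have hne' : A'.Nonempty := ⟨a₂, ha₂A, ha₂v⟩
        have hconn' : ∀ u ∈ A', ∀ w ∈ A', ∃ p : G.Walk u w, ∀ t ∈ p.support, t ∈ A' := by
          intro u hu w hw
          obtain ⟨p, hp⟩ := hconn u hu.1 w hw.1
          obtain ⟨q, hq⟩ := walk_avoid
            (fun u' v' hu' hv' h1 h2 hne'' => hNv u' v' (Or.inl hu') (Or.inl hv') h1 h2 hne'')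
            p.length p le_rfl hp (by simpa using hu.2) (by simpa using hw.2)
          exact ⟨q, fun t ht => ⟨(hq t ht).1, by simpa using (hq t ht).2⟩⟩
        have hdisj' : ∀ x ∈ S₀, x ∉ A' := fun x hx h => hdisj x hx h.1
        have hfull' : ∀ x ∈ S₀, ∃ a ∈ A', G.Adj x a := by
          intro x hx
          obtain ⟨a, haA, hxa⟩ := hfull x hx
          by_cases hav : a = v
          · subst hav
            have hxa₂ : G.Adj x a₂ := hNv x a₂ (Or.inr hx) (Or.inl ha₂A) hxa.symm hva₂
              (fun he => hdisj x hx (he ▸ ha₂A))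
            exact ⟨a₂, ⟨ha₂A, by simpa using ha₂v⟩, hxa₂⟩
          · exact ⟨a, ⟨haA, by simpa using hav⟩, hxa⟩
        obtain ⟨z, hz, hzall⟩ := ihn A' S₀ hcard' hne' hconn' hdisj' hclS hfull'
        exact ⟨z, hz.1, hzall⟩

lemma simplicial_closednbhd_clique {v : V} (hv : IsSimplicial G v) :
    G.IsClique (insert v (G.neighborSet v)) := by
  intro a ha b hb hne
  rcases ha with rfl | ha
  · rcases hb with rfl | hb
    · exact absurd rfl hne
    · exact hb
  · rcases hb with rfl | hb
    · exact ha.symm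
    · exact hv ha hb hne

lemma simplicial_clique_subset {v : V} (hv : IsSimplicial G v) {t : Set V} (ht : G.IsClique t)
    (hvt : v ∈ t) : t ⊆ insert v (G.neighborSet v) := by
  intro u hu
  by_cases huv : u = v
  · subst huv; exact Set.mem_insert _ _
  · exact Set.mem_insert_of_mem _ (ht hvt hu (fun h => huv h.symm))

lemma simplicial_maxclique {v : V} (hv : IsSimplicial G v) :
    IsMaxClique G (insert v (G.neighborSet v)) :=
  ⟨simplicial_closednbhd_clique hv, fun t ht hsub =>
    Set.Subset.antisymm hsub (simplicial_clique_subset hv ht (hsub (Set.mem_insert v _)))⟩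

lemma closed_of_walk {Cset : Set V} (hcl : ∀ u ∈ Cset, ∀ w, G.Adj u w → w ∈ Cset)
    {u w : V} (p : G.Walk u w) (hu : u ∈ Cset) : w ∈ Cset := by
  induction p with
  | nil => exact hu
  | cons h r ih => exact ih (hcl _ hu _ h)

lemma mem_Simp {C : Set V} {v : V} : v ∈ Simp G C ↔ v ∈ C ∧ IsSimplicial G v := Iff.rfl

lemma mem_Sep {C : Set V} {x : V} : x ∈ Sep G C ↔ x ∈ C ∧ ¬ IsSimplicial G x := by
  constructor
  · rintro ⟨h1, h2⟩
    exact ⟨h1, fun hs => h2 ⟨h1, hs⟩⟩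
  · rintro ⟨h1, h2⟩
    exact ⟨h1, fun hs => h2 hs.2⟩

/-- Main induction: a connected region `A` attached to the rest of the graph through a clique `Q`
of non-simplicial vertices, with an outside vertex `z` adjacent to all of `Q`, contains the
simplicial part of some boundary clique. -/
lemma main_induction (hch : IsChordal G) (hgc : G.Connected) :
    ∀ (n : ℕ) (A Q : Set V) (z : V), A.ncard ≤ n → A.Nonempty →
      (∀ a ∈ A, ∀ b, G.Adj a b → b ∈ A ∪ Q) →
      (∀ a ∈ A, a ∉ Q) →
      (∀ u ∈ A, ∀ v ∈ A, ∃ p : G.Walk u v, ∀ t ∈ p.support, t ∈ A) →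
      G.IsClique Q →
      (∀ x ∈ Q, ¬ IsSimplicial G x) →
      (∀ x ∈ Q, ∃ a ∈ A, G.Adj x a) →
      Q.Nonempty →
      z ∉ A → z ∉ Q →
      (∀ x ∈ Q, G.Adj z x) →
      ∃ C, IsBoundaryClique G C ∧ Simp G C ⊆ A := by
  intro n
  induction n with
  | zero =>
    intro A Q z hcard hne _ _ _ _ _ _ _ _ _ _
    exfalso
    have := (Set.ncard_pos A.toFinite).mpr hne
    omega
  | succ n ihn =>
    intro A Q z hcard hAne hclosure hAQdisj hAconn hQclique hQnonsimp hQfull hQne hzA hzQ hzadj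
    by_cases hAQ : G.IsClique (A ∪ Q)
    · -- the whole region is a clique
      set C := A ∪ Q with hCdef
      have hCmax : IsMaxClique G C := by
        refine ⟨hAQ, ?_⟩
        intro t ht hsub
        refine Set.Subset.antisymm hsub ?_
        intro u hu
        obtain ⟨a₀, ha₀⟩ := hAne
        by_cases hua : u = a₀
        · exact hua ▸ Or.inl ha₀
        · exact hclosure a₀ ha₀ u (ht (hsub (Or.inl ha₀)) hu (fun h => hua h.symm))
      have hSimpC : Simp G C = A := by
        ext w
        constructor
        · rintro ⟨hwC, hws⟩
          rcases hwC with h | h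
          · exact h
          · exact absurd hws (hQnonsimp w h)
        · intro hwA
          refine ⟨Or.inl hwA, ?_⟩
          intro u hu u' hu' hne
          exact hAQ (hclosure w hwA u hu) (hclosure w hwA u' hu') hne
      have hQclz : G.IsClique (insert z Q) := by
        intro a ha b hb hne
        rcases ha with rfl | ha
        · rcases hb with rfl | hb
          · exact absurd rfl hne
          · exact hzadj b hb
        · rcases hb with rfl | hb
          · exact (hzadj a ha).symm
          · exact hQclique ha hb hne
      obtain ⟨C', hC'max, hsub'⟩ := exists_maxclique _ hQclz
      have hzC' : z ∈ C' := hsub' (Set.mem_insert z Q)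
      have hC'ne : C' ≠ C := by
        intro he
        rcases he ▸ hzC' with h | h
        · exact hzA h
        · exact hzQ h
      have hAsimp : ∀ w ∈ A, IsSimplicial G w := by
        intro w hw
        rw [← hSimpC] at hw
        exact hw.2
      have hSep : Sep G C = C ∩ C' := by
        ext t
        rw [mem_Sep]
        constructor
        · rintro ⟨htC, hns⟩
          have htQ : t ∈ Q := by
            rcases htC with h | h
            · exact absurd (hAsimp t h) hns
            · exact h
          exact ⟨htC, hsub' (Set.mem_insert_of_mem _ htQ)⟩
        · rintro ⟨htC, htC'⟩
          refine ⟨htC, ?_⟩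
          have htQ : t ∈ Q := by
            rcases htC with h | h
            · exfalso
              have hadj : G.Adj t z := hC'max.1 htC' hzC' (fun he => hzA (he ▸ h))
              rcases hclosure t h z hadj with h' | h'
              · exact hzA h'
              · exact hzQ h'
            · exact h
          exact hQnonsimp t htQ
      exact ⟨C, ⟨hCmax, C', hC'max, hC'ne, hSep⟩, by rw [hSimpC]⟩
    · -- non-clique case: find a simplicial vertex in A
      set W := A ∪ Q with hWdef
      have hWne : W.Nonempty := hAne.mono Set.subset_union_left
      have hvex : ∃ v, v ∈ A ∧ SimpW G W v := by
        rcases dirac hch W.ncard W le_rfl hWne with hcomp | ⟨p1, q1, hp1, hq1, hne1, hnadj1⟩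
        · exact absurd hcomp hAQ
        · rcases hp1.1 with h | h
          · exact ⟨p1, h, hp1⟩
          · rcases hq1.1 with h' | h'
            · exact ⟨q1, h', hq1⟩
            · exact absurd (hQclique h h' hne1) hnadj1
      obtain ⟨v, hvA, hvS⟩ := hvex
      have hNveq : G.neighborSet v = {u | u ∈ W ∧ G.Adj v u} := by
        ext u
        exact ⟨fun h => ⟨hclosure v hvA u h, h⟩, fun h => h.2⟩
      have hvsimp : IsSimplicial G v := by
        rw [IsSimplicial, hNveq]
        exact hvS.2
      set Cv := insert v (G.neighborSet v) with hCvdef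
      have hCvmax : IsMaxClique G Cv := simplicial_maxclique hvsimp
      have hCvcl : G.IsClique Cv := hCvmax.1
      have hCvW : Cv ⊆ W := by
        intro u hu
        rcases hu with rfl | hu
        · exact Or.inl hvA
        · exact hclosure v hvA u hu
      set P := Sep G Cv with hPdef
      have hPx : ∀ x, x ∈ P ↔ (x ∈ Cv ∧ ¬ IsSimplicial G x) := fun x => mem_Sep
      have hPsubCv : P ⊆ Cv := fun x hx => ((hPx x).mp hx).1
      have hSimpsub : Simp G Cv ⊆ A := by
        rintro w ⟨hwC, hws⟩
        rcases hCvW hwC with h | h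
        · exact h
        · exact absurd hws (hQnonsimp w h)
      have hSimpNbhd : ∀ w ∈ Simp G Cv, insert w (G.neighborSet w) = Cv := by
        rintro w ⟨hwC, hws⟩
        exact (hCvmax.2 _ (simplicial_closednbhd_clique hws)
          (simplicial_clique_subset hws hCvcl hwC)).symm
      have hvSimp : v ∈ Simp G Cv := ⟨Set.mem_insert v _, hvsimp⟩
      by_cases hbdry : ∃ y, y ∉ Cv ∧ ∀ p ∈ P, G.Adj y p
      · obtain ⟨y, hyCv, hy⟩ := hbdry
        have hPyclique : G.IsClique (insert y P) := by
          intro a ha b hb hne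
          rcases ha with rfl | ha
          · rcases hb with rfl | hb
            · exact absurd rfl hne
            · exact hy b hb
          · rcases hb with rfl | hb
            · exact (hy a ha).symm
            · exact hCvcl (hPsubCv ha) (hPsubCv hb) hne
        obtain ⟨C', hC'max, hsub'⟩ := exists_maxclique _ hPyclique
        have hyC' : y ∈ C' := hsub' (Set.mem_insert y P)
        have hC'ne : C' ≠ Cv := fun he => hyCv (he ▸ hyC')
        have hSep : Sep G Cv = Cv ∩ C' := by
          ext t
          constructor
          · intro ht
            exact ⟨hPsubCv ht, hsub' (Set.mem_insert_of_mem _ ht)⟩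
          · rintro ⟨htCv, htC'⟩
            rw [hPx]
            refine ⟨htCv, ?_⟩
            intro hts
            have hCvt : insert t (G.neighborSet t) = Cv := hSimpNbhd t ⟨htCv, hts⟩
            have : C' ⊆ Cv := hCvt ▸ simplicial_clique_subset hts hC'max.1 htC'
            exact hyCv (this hyC')
        exact ⟨Cv, ⟨hCvmax, C', hC'max, hC'ne, hSep⟩, hSimpsub⟩
      · -- P has no common external neighbor; derive a contradiction via a component
        have hPne : P.Nonempty := by
          by_contra hPe
          rw [Set.not_nonempty_iff_eq_empty] at hPe
          have hclosedCv : ∀ w ∈ Cv, ∀ u, G.Adj w u → u ∈ Cv := by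
            intro w hw u hadj
            have hws : IsSimplicial G w := by
              by_contra hns
              exact absurd ((hPx w).mpr ⟨hw, hns⟩) (by rw [hPe]; exact Set.notMem_empty w)
            rw [← hSimpNbhd w ⟨hw, hws⟩]
            exact Set.mem_insert_of_mem _ hadj
          obtain ⟨x₀, hx₀⟩ := hQne
          obtain ⟨p⟩ := hgc.preconnected v x₀
          have hx₀Cv : x₀ ∈ Cv := closed_of_walk hclosedCv p (Set.mem_insert v _)
          have hx₀s : IsSimplicial G x₀ := by
            by_contra hns
            exact absurd ((hPx x₀).mpr ⟨hx₀Cv, hns⟩) (by rw [hPe]; exact Set.notMem_empty x₀)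
          exact hQnonsimp x₀ hx₀ hx₀s
        have hDne : ∃ d₀, d₀ ∈ W ∧ d₀ ∉ Cv := by
          by_contra hno
          push_neg at hno
          exact hAQ (hCvcl.subset hno)
        have hsimpreach : ∀ {w t : V} (p : G.Walk w t),
            (∀ s ∈ p.support, s ∈ W ∧ s ∉ P) → w ∈ Simp G Cv → t ∈ Simp G Cv := by
          intro w t p
          induction p with
          | nil => exact fun _ h => h
          | cons h r ih =>
            rename_i w c t'
            intro hp hw
            have hcC : c ∈ Cv := by
              rw [← hSimpNbhd w hw]
              exact Set.mem_insert_of_mem _ h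
            have hcP : c ∉ P := (hp c (by simp)).2
            have hcS : c ∈ Simp G Cv := by
              refine ⟨hcC, ?_⟩
              by_contra hns
              exact hcP ((hPx c).mpr ⟨hcC, hns⟩)
            exact ih (fun s hs => hp s (by simp [hs])) hcS
        have hreach_nsimp : ∀ {d t : V}, d ∉ Simp G Cv → ReachWithin G W P d t →
            t ∉ Simp G Cv := by
          intro d t hd hr ht
          obtain ⟨p, hp⟩ := reach_symm hr
          exact hd (hsimpreach p hp ht)
        by_cases hgood : ∃ d, (d ∈ W ∧ d ∉ Cv) ∧ ∀ q ∈ Q, ¬ ReachWithin G W P d q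
        · obtain ⟨d, ⟨hdW, hdCv⟩, hdQ⟩ := hgood
          have hdP : d ∉ P := fun h => hdCv (hPsubCv h)
          set A₂ := {t | ReachWithin G W P d t} with hA₂def
          have hdA₂ : d ∈ A₂ := reach_refl hdW hdP
          have hA₂A : A₂ ⊆ A := by
            intro t ht
            have h1 := reach_right ht
            rcases h1.1 with h | h
            · exact h
            · exact absurd ht (hdQ t h)
          have hdSimp : d ∉ Simp G Cv := fun h => hdCv h.1
          have hA₂Simp : ∀ t ∈ A₂, t ∉ Simp G Cv := fun t ht => hreach_nsimp hdSimp ht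
          have hvA₂ : v ∉ A₂ := fun h => hA₂Simp v h hvSimp
          set Q₂ := {x | x ∈ P ∧ ∃ t ∈ A₂, G.Adj x t} with hQ₂def
          have hA₂card : A₂.ncard ≤ n := by
            have hss : A₂ ⊂ A := ⟨hA₂A, fun h => hvA₂ (h hvA)⟩
            have := Set.ncard_lt_ncard hss A.toFinite
            omega
          have hA₂closure : ∀ a ∈ A₂, ∀ b, G.Adj a b → b ∈ A₂ ∪ Q₂ := by
            intro a ha b hadj
            by_cases hbP : b ∈ P
            · exact Or.inr ⟨hbP, a, ha, hadj.symm⟩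
            · have hbW : b ∈ W := hclosure a (hA₂A ha) b hadj
              exact Or.inl (reach_step ha hadj hbW hbP)
          have hA₂Q₂ : ∀ a ∈ A₂, a ∉ Q₂ := fun a ha h => (reach_right ha).2 h.1
          have hA₂conn : ∀ u ∈ A₂, ∀ w ∈ A₂, ∃ p : G.Walk u w, ∀ t ∈ p.support, t ∈ A₂ :=
            fun u hu w hw => reach_conn hu hw
          have hQ₂clique : G.IsClique Q₂ := hCvcl.subset (fun x hx => hPsubCv hx.1)
          have hQ₂nonsimp : ∀ x ∈ Q₂, ¬ IsSimplicial G x := fun x hx => ((hPx x).mp hx.1).2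
          have hQ₂full : ∀ x ∈ Q₂, ∃ a ∈ A₂, G.Adj x a := fun x hx => hx.2
          have hvP : v ∉ P := fun h => ((hPx v).mp h).2 hvsimp
          have hQ₂ne : Q₂.Nonempty := by
            by_contra hQ₂e
            rw [Set.not_nonempty_iff_eq_empty] at hQ₂e
            have hcl2 : ∀ u ∈ A₂, ∀ w, G.Adj u w → w ∈ A₂ := by
              intro u hu w hadj
              rcases hA₂closure u hu w hadj with h | h
              · exact h
              · exact absurd (hQ₂e ▸ h) (Set.notMem_empty w)
            obtain ⟨p⟩ := hgc.preconnected d v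
            exact hvA₂ (closed_of_walk hcl2 p hdA₂)
          have hvQ₂ : v ∉ Q₂ := fun h => hvP h.1
          have hvadj : ∀ x ∈ Q₂, G.Adj v x := by
            intro x hx
            have hxCv : x ∈ Cv := hPsubCv hx.1
            exact hCvcl (Set.mem_insert v _) hxCv (fun he => hvP (he ▸ hx.1))
          obtain ⟨C, hbd, hsub⟩ := ihn A₂ Q₂ v hA₂card ⟨d, hdA₂⟩ hA₂closure hA₂Q₂ hA₂conn
            hQ₂clique hQ₂nonsimp hQ₂full hQ₂ne hvA₂ hvQ₂ hvadj
          exact ⟨C, hbd, hsub.trans hA₂A⟩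
        · -- all components outside Cv reach Q: they form one component, full for P
          push_neg at hgood
          obtain ⟨d₀, hd₀W, hd₀Cv⟩ := hDne
          set Δ := {t | ReachWithin G W P d₀ t} with hΔdef
          obtain ⟨q₀, hq₀Q, hq₀r⟩ := hgood d₀ ⟨hd₀W, hd₀Cv⟩
          have hd₀Simp : d₀ ∉ Simp G Cv := fun h => hd₀Cv h.1
          have hΔSimp : ∀ t ∈ Δ, t ∉ Simp G Cv := fun t ht => hreach_nsimp hd₀Simp ht
          have hΔCv : ∀ t ∈ Δ, t ∉ Cv := by
            intro t ht htCv
            by_cases hts : IsSimplicial G t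
            · exact hΔSimp t ht ⟨htCv, hts⟩
            · exact (reach_right ht).2 ((hPx t).mpr ⟨htCv, hts⟩)
          have hDsubΔ : ∀ e, e ∈ W → e ∉ Cv → e ∈ Δ := by
            intro e heW heCv
            obtain ⟨q₁, hq₁Q, hq₁r⟩ := hgood e ⟨heW, heCv⟩
            by_cases hq : q₀ = q₁
            · exact reach_trans hq₀r (hq ▸ reach_symm hq₁r)
            · have hadj : G.Adj q₀ q₁ := hQclique hq₀Q hq₁Q hq
              have h1 := reach_right hq₁r
              exact reach_trans (reach_step hq₀r hadj h1.1 h1.2) (reach_symm hq₁r)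
          have hfullΔ : ∀ p ∈ P, ∃ t ∈ Δ, G.Adj p t := by
            intro p hp
            have hpCv := hPsubCv hp
            rcases hCvW hpCv with hpA | hpQ
            · by_cases hex : ∃ b, G.Adj p b ∧ b ∉ Cv
              · obtain ⟨b, hb1, hb2⟩ := hex
                have hbW : b ∈ W := hclosure p hpA b hb1
                exact ⟨b, hDsubΔ b hbW hb2, hb1⟩
              · exfalso
                push_neg at hex
                have hps : IsSimplicial G p := by
                  intro u hu w hw hne
                  exact hCvcl (hex u hu) (hex w hw) hne
                exact ((hPx p).mp hp).2 hps
            · have hq₀Cv : q₀ ∉ Cv := hΔCv q₀ hq₀r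
              have hne : p ≠ q₀ := fun he => hq₀Cv (he ▸ hpCv)
              exact ⟨q₀, hq₀r, hQclique hpQ hq₀Q hne⟩
          have hPclique : G.IsClique P := hCvcl.subset hPsubCv
          have hd₀P : d₀ ∉ P := fun h => hd₀Cv (hPsubCv h)
          have hΔne : Δ.Nonempty := ⟨d₀, reach_refl hd₀W hd₀P⟩
          have hΔconn : ∀ u ∈ Δ, ∀ w ∈ Δ, ∃ p : G.Walk u w, ∀ t ∈ p.support, t ∈ Δ :=
            fun u hu w hw => reach_conn hu hw
          have hΔdisj : ∀ x ∈ P, x ∉ Δ := fun x hx hxΔ => (reach_right hxΔ).2 hx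
          obtain ⟨z', hz'Δ, hz'⟩ := common_neighbor hch Δ.ncard Δ P le_rfl hΔne hΔconn
            hΔdisj hPclique (fun x hx => hfullΔ x hx)
          exact absurd ⟨z', hΔCv z' hz'Δ, fun p hp => hz' p hp⟩ hbdry

end Aux

theorem component_contains_boundary_simplicial_component {V : Type*} [Fintype V]
    (G : SimpleGraph V) (hconn : G.Connected) (hch : IsChordal G)
    (hnc : ¬ CompleteOn G Set.univ)
    (S : Set V) (hS : IsInclMinSeparator G S)
    (Γ : Set V) (hΓ : IsCompOutside G S Γ) :
    ∃ C : Set V, IsBoundaryClique G C ∧ Simp G C ⊆ Γ := by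
  classical
  obtain ⟨⟨hSuniv, u, w, hsepuw, hminuw⟩, hinclmin⟩ := hS
  obtain ⟨g₀, hg₀S, hΓeq⟩ := hΓ
  have hΓmem : ∀ t, t ∈ Γ ↔ ReachWithin G Set.univ S g₀ t := fun t => by
    rw [hΓeq]; exact Iff.rfl
  have hg₀Γ : g₀ ∈ Γ := (hΓmem g₀).mpr (reach_refl (Set.mem_univ g₀) hg₀S)
  obtain ⟨huU, hwU, huS, hwS, huw, hnr⟩ := hsepuw
  have hh : ∃ h, h ∉ Γ ∧ h ∉ S := by
    by_cases hu : u ∈ Γ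
    · refine ⟨w, ?_, hwS⟩
      intro hwΓ
      exact hnr (reach_trans (reach_symm ((hΓmem u).mp hu)) ((hΓmem w).mp hwΓ))
    · exact ⟨u, hu, huS⟩
  obtain ⟨h, hhΓ, hhS⟩ := hh
  have hsep : ¬ ReachWithin G Set.univ S g₀ h := fun hr => hhΓ ((hΓmem h).mpr hr)
  have hg₀h : g₀ ≠ h := fun he => hhΓ (he ▸ hg₀Γ)
  obtain ⟨T, hTsub, hTsep, hTmin⟩ :=
    exists_min_subset (P := fun T => ¬ ReachWithin G Set.univ T g₀ h) hsep
  have hTeq : T = S := by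
    apply hinclmin T _ hTsub
    refine ⟨Set.subset_univ T, g₀, h,
      ⟨Set.mem_univ _, Set.mem_univ _, fun hm => hg₀S (hTsub hm), fun hm => hhS (hTsub hm),
        hg₀h, hTsep⟩, ?_⟩
    intro S' hS' hsepS'
    exact hTmin S' hS' hsepS'.2.2.2.2.2
  rw [hTeq] at hTmin
  have hfull : ∀ x ∈ S, (∃ d, G.Adj x d ∧ ReachWithin G Set.univ S g₀ d) ∧
      (∃ d, G.Adj x d ∧ ReachWithin G Set.univ S h d) := by
    intro x hxS
    have hss : S \ {x} ⊂ S := by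
      constructor
      · exact Set.diff_subset
      · intro hsub
        exact (hsub hxS).2 rfl
    obtain ⟨p, hp⟩ := not_not.mp (hTmin _ hss)
    have hp' : ∀ t ∈ p.support, t ∈ Set.univ ∧ (t ∈ S → t = x) := by
      intro t ht
      refine ⟨Set.mem_univ t, fun htS => ?_⟩
      by_contra hne
      exact (hp t ht).2 ⟨htS, hne⟩
    have hg₀T : g₀ ∉ S := hg₀S
    obtain ⟨_, d, hd, hr⟩ := sep_neighbor hg₀T hsep p hp'
    obtain ⟨_, d', hd', hr'⟩ := sep_neighbor hhS (fun hr => hsep (reach_symm hr)) p.reverse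
      (by intro t ht; exact hp' t (by simpa using ht))
    exact ⟨⟨d, hd, hr⟩, ⟨d', hd', hr'⟩⟩
  have hdisj : ∀ t, ReachWithin G Set.univ S g₀ t → ReachWithin G Set.univ S h t → False :=
    fun t h1 h2 => hsep (reach_trans h1 (reach_symm h2))
  have hnadjAB : ∀ t, ReachWithin G Set.univ S g₀ t → ∀ t', ReachWithin G Set.univ S h t' →
      ¬ G.Adj t t' := by
    intro t h1 t' h2 hadj
    have h3 := reach_right h2
    exact hdisj t' (reach_step h1 hadj h3.1 h3.2) h2
  have hSnonsimp : ∀ x ∈ S, ¬ IsSimplicial G x := by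
    intro x hxS hs
    obtain ⟨⟨d, hd, hr⟩, ⟨d', hd', hr'⟩⟩ := hfull x hxS
    have hne : d ≠ d' := fun he => hdisj d hr (he ▸ hr')
    exact hnadjAB d hr d' hr' (hs hd hd' hne)
  have hSclique : G.IsClique S := by
    intro x hxS y hyS hne
    obtain ⟨⟨d1, hd1, hr1⟩, ⟨d2, hd2, hr2⟩⟩ := hfull x hxS
    obtain ⟨⟨e1, he1, hs1⟩, ⟨e2, he2, hs2⟩⟩ := hfull y hyS
    obtain ⟨pc, hpc⟩ := reach_conn hr1 hs1
    obtain ⟨qc, hqc⟩ := reach_conn hs2 hr2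
    exact adj_of_linked hch
      (A := {t | ReachWithin G Set.univ S g₀ t}) (B := {t | ReachWithin G Set.univ S h t})
      (fun a ha b hb => hnadjAB a ha b hb) (fun a ha hb => hdisj a ha hb) hne
      (fun hm => (reach_right hm).2 hxS) (fun hm => (reach_right hm).2 hxS)
      (fun hm => (reach_right hm).2 hyS) (fun hm => (reach_right hm).2 hyS)
      hr1 hd1 hs1 he1 hr2 hd2 hs2 he2 ⟨pc, hpc⟩ ⟨qc, hqc⟩
  have hSne : S.Nonempty := by
    by_contra hSe
    rw [Set.not_nonempty_iff_eq_empty] at hSe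
    obtain ⟨p⟩ := hconn.preconnected g₀ h
    exact hsep ⟨p, fun t _ => ⟨Set.mem_univ t, by rw [hSe]; exact Set.notMem_empty t⟩⟩
  -- common neighbor of S in the component of h
  obtain ⟨z, hzΓ', hzadj⟩ := common_neighbor hch ({t | ReachWithin G Set.univ S h t}).ncard
    {t | ReachWithin G Set.univ S h t} S le_rfl
    ⟨h, reach_refl (Set.mem_univ h) hhS⟩
    (fun a ha b hb => reach_conn ha hb)
    (fun x hx hm => (reach_right hm).2 hx)
    hSclique
    (fun x hx => by
      obtain ⟨_, ⟨d, hd, hr⟩⟩ := hfull x hx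
      exact ⟨d, hr, hd⟩)
  exact main_induction hch hconn Γ.ncard Γ S z le_rfl ⟨g₀, hg₀Γ⟩
    (by
      intro a ha b hadj
      by_cases hbS : b ∈ S
      · exact Or.inr hbS
      · exact Or.inl ((hΓmem b).mpr (reach_step ((hΓmem a).mp ha) hadj (Set.mem_univ b) hbS)))
    (fun a ha => (reach_right ((hΓmem a).mp ha)).2)
    (by
      intro a ha b hb
      obtain ⟨p, hp⟩ := reach_conn ((hΓmem a).mp ha) ((hΓmem b).mp hb)
      exact ⟨p, fun t ht => (hΓmem t).mpr (hp t ht)⟩)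
    hSclique hSnonsimp
    (fun x hx => by
      obtain ⟨⟨d, hd, hr⟩, _⟩ := hfull x hx
      exact ⟨d, (hΓmem d).mpr hr, hd⟩)
    hSne
    (fun hz => hdisj z ((hΓmem z).mp hz) hzΓ')
    ((reach_right hzΓ').2)
    hzadj

end Chordal
end

section
/- Let G be a connected chordal graph with at least two maximal cliques. Every tree whose node set is the set of maximal cliques of G is a clique tree of G if and only if G has exactly one minimal vertex separator. -/
namespace Chordal

variable {V : Type*} [Fintype V]

section Aux

variable {G : SimpleGraph V}

/-- Every clique is contained in a maximal clique. -/
lemma exists_maxClique_superset {t : Set V} (ht : G.IsClique t) :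
    ∃ s, IsMaxClique G s ∧ t ⊆ s := by
  obtain ⟨s, hs, hmax⟩ := Set.Finite.exists_maximalFor id
    {s : Set V | G.IsClique s ∧ t ⊆ s} (Set.toFinite _) ⟨t, ht, subset_rfl⟩
  exact ⟨s, ⟨hs.1, fun t' ht' hst' => hst'.antisymm (hmax ⟨ht', hs.2.trans hst'⟩ hst')⟩, hs.2⟩

lemma exists_maxClique_mem (v : V) : ∃ s, IsMaxClique G s ∧ v ∈ s := by
  obtain ⟨s, hs, hsub⟩ := exists_maxClique_superset (G.isClique_singleton v)
  exact ⟨s, hs, hsub rfl⟩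

lemma exists_maxClique_edge {x y : V} (h : G.Adj x y) :
    ∃ s, IsMaxClique G s ∧ x ∈ s ∧ y ∈ s := by
  obtain ⟨s, hs, hsub⟩ := exists_maxClique_superset (SimpleGraph.isClique_pair.mpr fun _ => h)
  exact ⟨s, hs, hsub (Set.mem_insert _ _), hsub (Set.mem_insert_of_mem _ rfl)⟩

/-- Two distinct maximal cliques contain a nonadjacent pair of vertices. -/
lemma exists_nonadj {C₁ C₂ : Set V} (h₁ : IsMaxClique G C₁) (h₂ : IsMaxClique G C₂)
    (hne : C₁ ≠ C₂) : ∃ a, a ∈ C₁ ∧ a ∉ C₂ ∧ ∃ b, b ∈ C₂ ∧ b ∉ C₁ ∧ ¬ G.Adj a b := by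
  by_contra hcon
  push_neg at hcon
  have hcl : G.IsClique (C₁ ∪ C₂) := by
    intro x hx y hy hxy
    rcases hx with hx1 | hx2
    · rcases hy with hy1 | hy2
      · exact h₁.1 hx1 hy1 hxy
      · by_cases hxC2 : x ∈ C₂
        · exact h₂.1 hxC2 hy2 hxy
        · by_cases hyC1 : y ∈ C₁
          · exact h₁.1 hx1 hyC1 hxy
          · exact hcon x hx1 hxC2 y hy2 hyC1
    · rcases hy with hy1 | hy2
      · by_cases hyC2 : y ∈ C₂
        · exact h₂.1 hx2 hyC2 hxy
        · by_cases hxC1 : x ∈ C₁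
          · exact h₁.1 hxC1 hy1 hxy
          · exact (hcon y hy1 hyC2 x hx2 hxC1).symm
      · exact h₂.1 hx2 hy2 hxy
  have e1 : C₁ = C₁ ∪ C₂ := h₁.2 _ hcl Set.subset_union_left
  have e2 : C₂ = C₂ ∪ C₁ := h₂.2 _ (by rwa [Set.union_comm C₂ C₁]) Set.subset_union_left
  rw [Set.union_comm] at e2
  exact hne (e1.trans e2.symm)

/-- The complement of a nonadjacent pair separates that pair. -/
lemma separatesOn_compl_pair {a b : V} (hab : ¬ G.Adj a b) (hne : a ≠ b) :
    SeparatesOn G Set.univ (Set.univ \ {a, b}) a b := by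
  refine ⟨trivial, trivial, by simp, by simp, hne, ?_⟩
  rintro ⟨p, hp⟩
  cases p with
  | nil => exact hne rfl
  | cons h q =>
    have hy := hp _ (by
      rw [SimpleGraph.Walk.support_cons]
      exact List.mem_cons_of_mem _ q.start_mem_support)
    rcases hy with ⟨-, hy⟩
    simp only [Set.mem_diff, Set.mem_univ, true_and, not_not, Set.mem_insert_iff,
      Set.mem_singleton_iff] at hy
    rcases hy with hy | hy
    · exact h.ne' (by rw [hy])
    · subst hy; exact hab h

/-- Any separated pair admits a minimal separator. -/
lemma exists_min_sep {a b : V} (hab : ¬ G.Adj a b) (hne : a ≠ b) :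
    ∃ S, SeparatesOn G Set.univ S a b ∧ ∀ S' ⊂ S, ¬ SeparatesOn G Set.univ S' a b := by
  obtain ⟨S, hS, hmin⟩ := Set.Finite.exists_minimalFor id
    {S : Set V | SeparatesOn G Set.univ S a b} (Set.toFinite _)
    ⟨_, separatesOn_compl_pair hab hne⟩
  exact ⟨S, hS, fun S' hlt hsep => (ssubset_iff_subset_not_superset.1 hlt).2 (hmin hsep hlt.le)⟩

/-- Separated pairs are nonadjacent. -/
lemma sep_not_adj {S : Set V} {a b : V} (h : SeparatesOn G Set.univ S a b) : ¬ G.Adj a b := by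
  intro hadj
  refine h.2.2.2.2.2 ⟨SimpleGraph.Walk.cons hadj SimpleGraph.Walk.nil, ?_⟩
  intro x hx
  simp only [SimpleGraph.Walk.support_cons, SimpleGraph.Walk.support_nil,
    List.mem_cons, List.mem_singleton, List.not_mem_nil, or_false] at hx
  rcases hx with rfl | rfl
  · exact ⟨trivial, h.2.2.1⟩
  · exact ⟨trivial, h.2.2.2.1⟩

/-- The key combinatorial property: any two distinct maximal cliques intersect inside
every maximal clique. -/
def PropH (G : SimpleGraph V) : Prop :=
  ∀ C₁ C₂ C₃ : Set V, IsMaxClique G C₁ → IsMaxClique G C₂ → IsMaxClique G C₃ →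
    C₁ ≠ C₂ → C₁ ∩ C₂ ⊆ C₃

/-- Under `PropH`, walks avoiding `Cu ∩ Cw` starting in the maximal clique `Cu`
stay in `Cu`. -/
lemma walk_stays_in_clique (hH : PropH G) {Cu Cw : Set V} (hu : IsMaxClique G Cu)
    (hwmax : IsMaxClique G Cw) :
    ∀ {a y : V} (p : G.Walk a y), a ∈ Cu → (∀ x ∈ p.support, x ∉ Cu ∩ Cw) → y ∈ Cu := by
  intro a y p
  induction p with
  | nil => exact fun ha _ => ha
  | @cons a x y h q ih =>
    intro ha hsup
    have haS : a ∉ Cu ∩ Cw := hsup a (by simp)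
    obtain ⟨C, hC, hxC, hyC⟩ := exists_maxClique_edge h
    have hCCu : C = Cu := by
      by_contra hne
      exact haS ⟨ha, hH C Cu Cw hC hu hwmax hne ⟨hxC, ha⟩⟩
    refine ih ?_ fun x hx => hsup x (by simp [SimpleGraph.Walk.support_cons, hx])
    rw [← hCCu]; exact hyC

/-- Under `PropH`, every minimal separator is the intersection of two distinct
maximal cliques. -/
lemma minSep_eq_inter (hH : PropH G) {S : Set V} (hS : IsMinSeparator G S) :
    ∃ Cu Cw, IsMaxClique G Cu ∧ IsMaxClique G Cw ∧ Cu ≠ Cw ∧ S = Cu ∩ Cw := by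
  obtain ⟨-, u, w, hsep, hmin⟩ := hS
  obtain ⟨-, -, huS, hwS, huw, hreach⟩ := hsep
  have hnadj : ¬ G.Adj u w := sep_not_adj ⟨trivial, trivial, huS, hwS, huw, hreach⟩
  obtain ⟨Cu, hCu, huCu⟩ := exists_maxClique_mem (G := G) u
  obtain ⟨Cw, hCw, hwCw⟩ := exists_maxClique_mem (G := G) w
  have hCuCw : Cu ≠ Cw := by
    rintro rfl
    exact hnadj (hCu.1 huCu hwCw huw)
  have huS0 : u ∉ Cu ∩ Cw := fun h => hnadj (hCw.1 h.2 hwCw huw)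
  have hwS0 : w ∉ Cu ∩ Cw := fun h => hnadj (hCu.1 huCu h.1 huw)
  have hsep0 : SeparatesOn G Set.univ (Cu ∩ Cw) u w := by
    refine ⟨trivial, trivial, huS0, hwS0, huw, ?_⟩
    rintro ⟨p, hp⟩
    have : w ∈ Cu := walk_stays_in_clique hH hCu hCw p huCu fun x hx => (hp x hx).2
    exact hnadj (hCu.1 huCu this huw)
  have hsub : Cu ∩ Cw ⊆ S := by
    intro x hx
    by_contra hxS
    have hxu : x ≠ u := fun h => huS0 (h ▸ hx)
    have hxw : x ≠ w := fun h => hwS0 (h ▸ hx)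
    have hadj1 : G.Adj u x := hCu.1 huCu hx.1 (Ne.symm hxu)
    have hadj2 : G.Adj x w := hCw.1 hx.2 hwCw hxw
    refine hreach ⟨SimpleGraph.Walk.cons hadj1 (SimpleGraph.Walk.cons hadj2 .nil), ?_⟩
    intro y hy
    simp only [SimpleGraph.Walk.support_cons, SimpleGraph.Walk.support_nil,
      List.mem_cons, List.mem_singleton, List.not_mem_nil, or_false] at hy
    rcases hy with rfl | rfl | rfl
    · exact ⟨trivial, huS⟩
    · exact ⟨trivial, hxS⟩
    · exact ⟨trivial, hwS⟩
  have heq : Cu ∩ Cw = S := by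
    by_contra hne
    exact hmin _ (Set.ssubset_iff_subset_ne.2 ⟨hsub, hne⟩) hsep0
  exact ⟨Cu, Cw, hCu, hCw, hCuCw, heq.symm⟩

/-- Under `PropH`, there is a unique minimal separator, provided the graph has at
least two maximal cliques. -/
lemma unique_of_H (hK : 1 < {s : Set V | IsMaxClique G s}.ncard) (hH : PropH G) :
    ∃! S : Set V, IsMinSeparator G S := by
  obtain ⟨C₁, hC₁, C₂, hC₂, hne⟩ := (Set.one_lt_ncard (Set.toFinite _)).1 hK
  obtain ⟨a, haC1, haC2, b, hbC2, hbC1, hab⟩ := exists_nonadj hC₁ hC₂ hne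
  have hne' : a ≠ b := fun h => hbC1 (h ▸ haC1)
  obtain ⟨S, hSsep, hSmin⟩ := exists_min_sep hab hne'
  have hS : IsMinSeparator G S := ⟨Set.subset_univ _, a, b, hSsep, hSmin⟩
  refine ⟨S, hS, fun S' hS' => ?_⟩
  obtain ⟨Cu, Cw, hCu, hCw, h1, e1⟩ := minSep_eq_inter hH hS'
  obtain ⟨Cu', Cw', hCu', hCw', h2, e2⟩ := minSep_eq_inter hH hS
  rw [e1, e2]
  exact Set.Subset.antisymm
    (Set.subset_inter (hH _ _ _ hCu hCw hCu' h1) (hH _ _ _ hCu hCw hCw' h1))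
    (Set.subset_inter (hH _ _ _ hCu' hCw' hCu h2) (hH _ _ _ hCu' hCw' hCw h2))

/-- A unique minimal separator implies `PropH`. -/
lemma H_of_unique (huniq : ∃! S : Set V, IsMinSeparator G S) : PropH G := by
  obtain ⟨S, hS, huni⟩ := huniq
  -- S is contained in every maximal clique
  have hkey : ∀ C : Set V, IsMaxClique G C → S ⊆ C := by
    intro C hC s hsS
    by_contra hsC
    have : ∃ t ∈ C, ¬ G.Adj s t := by
      by_contra hcon
      push_neg at hcon
      have hcl : G.IsClique (insert s C) := by
        intro x hx y hy hxy
        rcases hx with rfl | hx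
        · rcases hy with rfl | hy
          · exact absurd rfl hxy
          · exact hcon y hy
        · rcases hy with rfl | hy
          · exact (hcon x hx).symm
          · exact hC.1 hx hy hxy
      have := hC.2 _ hcl (Set.subset_insert _ _)
      exact hsC (this ▸ Set.mem_insert s C)
    obtain ⟨t, htC, hst⟩ := this
    have hstne : s ≠ t := fun h => hsC (h ▸ htC)
    obtain ⟨S', hS'sep, hS'min⟩ := exists_min_sep hst hstne
    have : S' = S := huni S' ⟨Set.subset_univ _, s, t, hS'sep, hS'min⟩
    exact hS'sep.2.2.1 (this ▸ hsS)
  -- intersections of distinct maximal cliques are contained in S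
  intro C₁ C₂ C₃ h₁ h₂ h₃ hne
  obtain ⟨a, haC1, haC2, b, hbC2, hbC1, hab⟩ := exists_nonadj h₁ h₂ hne
  have hne' : a ≠ b := fun h => hbC1 (h ▸ haC1)
  obtain ⟨S', hS'sep, hS'min⟩ := exists_min_sep hab hne'
  have hS'eq : S' = S := huni S' ⟨Set.subset_univ _, a, b, hS'sep, hS'min⟩
  subst hS'eq
  have hsub : C₁ ∩ C₂ ⊆ S' := by
    intro x hx
    by_contra hxS
    have hxa : x ≠ a := fun h => haC2 (h ▸ hx.2)
    have hxb : x ≠ b := fun h => hbC1 (h ▸ hx.1)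
    have hadj1 : G.Adj a x := h₁.1 haC1 hx.1 (Ne.symm hxa)
    have hadj2 : G.Adj x b := h₂.1 hx.2 hbC2 hxb
    refine hS'sep.2.2.2.2.2 ⟨SimpleGraph.Walk.cons hadj1 (SimpleGraph.Walk.cons hadj2 .nil), ?_⟩
    intro y hy
    simp only [SimpleGraph.Walk.support_cons, SimpleGraph.Walk.support_nil,
      List.mem_cons, List.mem_singleton, List.not_mem_nil, or_false] at hy
    rcases hy with rfl | rfl | rfl
    · exact ⟨trivial, hS'sep.2.2.1⟩
    · exact ⟨trivial, hxS⟩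
    · exact ⟨trivial, hS'sep.2.2.2.1⟩
  exact hsub.trans (hkey C₃ h₃)

/-- `PropH` implies that every tree on the maximal cliques is a clique tree. -/
lemma cliqueTree_of_H (hH : PropH G) (T : SimpleGraph {s : Set V // IsMaxClique G s})
    (hT : T.IsTree) : IsCliqueTree G T := by
  refine ⟨hT, ?_⟩
  intro C₁ C₂ p hp C₃ hC₃
  by_cases h : C₁ = C₂
  · subst h
    cases p with
    | nil =>
      simp only [SimpleGraph.Walk.support_nil, List.mem_singleton] at hC₃
      subst hC₃
      exact Set.inter_subset_left
    | cons hadj q =>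
      exfalso
      have := hp.support_nodup
      simp only [SimpleGraph.Walk.support_cons, List.nodup_cons] at this
      exact this.1 q.end_mem_support
  · exact hH C₁.1 C₂.1 C₃.1 C₁.2 C₂.2 C₃.2 (fun he => h (Subtype.ext he))

/-- The star centered at `c`. -/
def starGraph {α : Type*} (c : α) : SimpleGraph α where
  Adj X Y := X ≠ Y ∧ (X = c ∨ Y = c)
  symm := ⟨fun X Y ⟨h, h'⟩ => ⟨h.symm, h'.symm⟩⟩
  loopless := ⟨fun X ⟨h, _⟩ => h rfl⟩

lemma starGraph_isTree {α : Type*} (c : α) : (starGraph c).IsTree := by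
  constructor
  · -- connected
    have hreach : ∀ X : α, (starGraph c).Reachable X c := by
      intro X
      by_cases h : X = c
      · subst h; rfl
      · exact SimpleGraph.Adj.reachable ⟨h, Or.inr rfl⟩
    have : Nonempty α := ⟨c⟩
    exact SimpleGraph.Connected.mk
      (fun X Y => (hreach X).trans (hreach Y).symm)
  · -- acyclic
    intro v p hp
    have h3 := hp.three_le_length
    cases p with
    | nil => simp at h3
    | cons h₁ p₁ =>
      cases p₁ with
      | nil => simp at h3
      | cons h₂ p₂ =>
        cases p₂ with
        | nil => simp [SimpleGraph.Walk.length_cons] at h3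
        | @cons x₂ x₃ _ h₃ p₃ =>
          have hnodup := hp.support_nodup
          rw [SimpleGraph.Walk.support_cons, SimpleGraph.Walk.support_cons,
            SimpleGraph.Walk.support_cons, List.tail_cons, List.nodup_cons,
            List.nodup_cons] at hnodup
          obtain ⟨h1mem, h2mem, -⟩ := hnodup
          rcases h₂.2 with hx1 | hx2
          · rcases h₃.2 with hx2' | hx3
            · exact h₂.1 (hx1.trans hx2'.symm)
            · exact h1mem (List.mem_cons_of_mem _ (by
                rw [hx1.trans hx3.symm]
                exact p₃.start_mem_support))
          · rcases h₁.2 with hv | hx1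
            · exact h2mem (by
                rw [hx2.trans hv.symm]
                exact p₃.end_mem_support)
            · exact h₂.1 (hx1.trans hx2.symm)

/-- If every tree is a clique tree, then `PropH` holds. -/
lemma H_of_trees
    (htrees : ∀ T : SimpleGraph {s : Set V // IsMaxClique G s}, T.IsTree → IsCliqueTree G T) :
    PropH G := by
  intro C₁ C₂ C₃ h₁ h₂ h₃ hne
  by_cases h31 : C₃ = C₁
  · subst h31; exact Set.inter_subset_left
  by_cases h32 : C₃ = C₂
  · subst h32; exact Set.inter_subset_right
  set α := {s : Set V // IsMaxClique G s}
  set c1 : α := ⟨C₁, h₁⟩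
  set c2 : α := ⟨C₂, h₂⟩
  set c3 : α := ⟨C₃, h₃⟩
  have hne12 : c1 ≠ c2 := fun h => hne (congrArg Subtype.val h)
  have hne31 : c3 ≠ c1 := fun h => h31 (congrArg Subtype.val h)
  have hne32 : c3 ≠ c2 := fun h => h32 (congrArg Subtype.val h)
  have hT := htrees (starGraph c3) (starGraph_isTree c3)
  have hadj1 : (starGraph c3).Adj c1 c3 := ⟨hne31.symm, Or.inr rfl⟩
  have hadj2 : (starGraph c3).Adj c3 c2 := ⟨hne32, Or.inl rfl⟩
  set p : (starGraph c3).Walk c1 c2 :=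
    SimpleGraph.Walk.cons hadj1 (SimpleGraph.Walk.cons hadj2 .nil)
  have hpath : p.IsPath := by
    rw [SimpleGraph.Walk.isPath_def]
    simp only [p, SimpleGraph.Walk.support_cons, SimpleGraph.Walk.support_nil]
    simp [hne12, hne31, hne32, hne31.symm, hne32.symm, Ne.symm hne12]
  have := hT.2 c1 c2 p hpath c3 (by simp [p, SimpleGraph.Walk.support_cons])
  exact this

end Aux

theorem every_tree_is_cliqueTree_iff_unique_separator {V : Type*} [Fintype V]
    (G : SimpleGraph V) (hconn : G.Connected) (hch : IsChordal G)
    (hK : 1 < {s : Set V | IsMaxClique G s}.ncard) :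
    (∀ T : SimpleGraph {s : Set V // IsMaxClique G s}, T.IsTree → IsCliqueTree G T) ↔
      (∃! S : Set V, IsMinSeparator G S) := by
  constructor
  · intro htrees
    exact unique_of_H hK (H_of_trees htrees)
  · intro huniq T hT
    exact cliqueTree_of_H (H_of_unique huniq) T hT

end Chordal
end
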